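/- Let 0 < α < mn, a = 2^{m(n+1)}, and for k ∈ ℤ let Q_j^k be the maximal dyadic cubes of Ω_k = {M_α^d(f⃗) > a^k}, satisfying a^k < ∏_i |Q_j^k|^{−(1−α/(mn))}∫_{Q_j^k}|f_i| ≤ 2^{mn}a^k. Then |Q_j^k ∩ Ω_{k+1}| ≤ 2ⁿ a^{−1/m} |Q_j^k| for all j,k. -/

import Mathlib

open MeasureTheory ENNReal NNReal Set

noncomputable section

/-- Euclidean space `ℝⁿ`. -/
abbrev En (n : ℕ) := EuclideanSpace ℝ (Fin n)

/-- The axis-parallel half-open cube with lower corner `a` and side length `h`. -/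
def Cube (n : ℕ) (a : Fin n → ℝ) (h : ℝ) : Set (En n) :=
  {x | ∀ i, a i ≤ x i ∧ x i < a i + h}

/-- Conjugate exponent `p' = p/(p-1)`. -/
def rconj (p : ℝ) : ℝ := p / (p - 1)

/-- Multilinear fractional maximal operator `M_α`. -/
def MFrac (m n : ℕ) (α : ℝ) (f : Fin m → En n → ℝ) (x : En n) : ℝ≥0∞ :=
  ⨆ (a : Fin n → ℝ) (h : ℝ) (_ : 0 < h) (_ : x ∈ Cube n a h),
    ∏ i, (volume (Cube n a h)) ^ (α / (m * n : ℝ) - 1) *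
      ∫⁻ y in Cube n a h, (‖f i y‖₊ : ℝ≥0∞)

/-- Cube of the translated dyadic grid `D_β`. -/
def GridCube (n : ℕ) (β : Fin n → ℝ) (k : ℤ) (j : Fin n → ℤ) : Set (En n) :=
  Cube n (fun i => (2:ℝ) ^ (-k) * ((j i : ℝ) + (-1 : ℝ) ^ k * β i)) ((2:ℝ) ^ (-k))

/-- Multilinear fractional maximal operator restricted to the grid `D_β`. -/
def MFracGrid (m n : ℕ) (α : ℝ) (β : Fin n → ℝ) (f : Fin m → En n → ℝ) (x : En n) : ℝ≥0∞ :=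
  ⨆ (k : ℤ) (j : Fin n → ℤ) (_ : x ∈ GridCube n β k j),
    ∏ i, (volume (GridCube n β k j)) ^ (α / (m * n : ℝ) - 1) *
      ∫⁻ y in GridCube n β k j, (‖f i y‖₊ : ℝ≥0∞)

/-- The multiple weight constant `[ω]_{A_{(P,q)}}` (all `p i > 1`). -/
def Apq (m n : ℕ) (p : Fin m → ℝ) (q : ℝ) (ω : Fin m → En n → ℝ≥0∞) : ℝ≥0∞ :=
  ⨆ (a : Fin n → ℝ) (h : ℝ) (_ : 0 < h),
    ((volume (Cube n a h))⁻¹ * ∫⁻ x in Cube n a h, (∏ i, ω i x) ^ q) *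
      ∏ i, ((volume (Cube n a h))⁻¹ *
        ∫⁻ x in Cube n a h, ω i x ^ (-(rconj (p i)))) ^ (q / rconj (p i))

/-- Hardy–Littlewood maximal operator (over cubes). -/
def HLMax (n : ℕ) (g : En n → ℝ≥0∞) (x : En n) : ℝ≥0∞ :=
  ⨆ (a : Fin n → ℝ) (h : ℝ) (_ : 0 < h) (_ : x ∈ Cube n a h),
    (volume (Cube n a h))⁻¹ * ∫⁻ y in Cube n a h, g y

/-- The Fujii–Wilson `A_∞` constant. -/
def AInfty (n : ℕ) (w : En n → ℝ≥0∞) : ℝ≥0∞ :=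
  ⨆ (a : Fin n → ℝ) (h : ℝ) (_ : 0 < h),
    (∫⁻ x in Cube n a h, w x)⁻¹ *
      ∫⁻ x in Cube n a h, HLMax n ((Cube n a h).indicator w) x

/-- Weighted `L^p` "norm" `(∫ F^p w)^{1/p}` for `ℝ≥0∞`-valued `F`. -/
def wnorm (n : ℕ) (p : ℝ) (w : En n → ℝ≥0∞) (F : En n → ℝ≥0∞) : ℝ≥0∞ :=
  (∫⁻ x, F x ^ p * w x) ^ (1 / p)

/-- Multilinear fractional maximal operator with rough homogeneous kernel `Ω`. -/
def MOmega (m n : ℕ) (α : ℝ) (Ω : (Fin m → En n) → ℝ) (f : Fin m → En n → ℝ)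
    (x : En n) : ℝ≥0∞ :=
  ⨆ (a : Fin n → ℝ) (h : ℝ) (_ : 0 < h) (_ : x ∈ Cube n a h),
    (volume (Cube n a h)) ^ (α / (n : ℝ) - m) *
      ∫⁻ y in univ.pi (fun _ : Fin m => Cube n a h),
        (‖Ω (fun i => x - y i)‖₊ : ℝ≥0∞) * ∏ i, (‖f i (y i)‖₊ : ℝ≥0∞)

/-- The `L^s((S^{n-1})^m)` norm of a (degree-zero homogeneous) kernel, realized through the
cone measure on the product of unit spheres. -/
def sphereNorm (m n : ℕ) (s : ℝ) (Ω : (Fin m → En n) → ℝ) : ℝ≥0∞ :=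
  eLpNorm Ω (ENNReal.ofReal s)
    (Measure.map (fun (y : Fin m → En n) (i : Fin m) => ‖y i‖⁻¹ • y i)
      (((n : ℝ≥0∞) ^ m) • volume.restrict (univ.pi fun _ : Fin m => Metric.ball (0 : En n) 1)))

/-- Euclidean norm of `(y₁, …, y_m) ∈ (ℝⁿ)^m`. -/
def bigNorm (m n : ℕ) (y : Fin m → En n) : ℝ := Real.sqrt (∑ i, ‖y i‖ ^ 2)

/-- Multilinear fractional integral with rough homogeneous kernel (absolute values). -/
def IOmega (m n : ℕ) (α : ℝ) (Ω : (Fin m → En n) → ℝ) (f : Fin m → En n → ℝ)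
    (x : En n) : ℝ≥0∞ :=
  ∫⁻ y : Fin m → En n,
    ENNReal.ofReal (bigNorm m n y ^ (α - (m * n : ℝ))) * (‖Ω y‖₊ : ℝ≥0∞) *
      ∏ i, (‖f i (x - y i)‖₊ : ℝ≥0∞)

/-- Standard dyadic cube `2^{-k}([0,1)^n + j)`. -/
def DyadicCube (n : ℕ) (k : ℤ) (j : Fin n → ℤ) : Set (En n) :=
  Cube n (fun i => (j i : ℝ) * (2:ℝ) ^ (-k)) ((2:ℝ) ^ (-k))

def IsDyadic (n : ℕ) (S : Set (En n)) : Prop := ∃ k j, S = DyadicCube n k j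

/-- The product of fractional averages `∏_i |S|^{α/(mn)-1} ∫_S |f_i|`. -/
def dyadAvg (m n : ℕ) (α : ℝ) (f : Fin m → En n → ℝ) (S : Set (En n)) : ℝ≥0∞ :=
  ∏ i, (volume S) ^ (α / (m * n : ℝ) - 1) * ∫⁻ y in S, (‖f i y‖₊ : ℝ≥0∞)

/-- Dyadic multilinear fractional maximal operator `M_α^d`. -/
def MFracDyadic (m n : ℕ) (α : ℝ) (f : Fin m → En n → ℝ) (x : En n) : ℝ≥0∞ :=
  ⨆ (k : ℤ) (j : Fin n → ℤ) (_ : x ∈ DyadicCube n k j), dyadAvg m n α f (DyadicCube n k j)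

/-- A maximal (Calderón–Zygmund) dyadic cube of the level set at height `t`. -/
def IsCZCube (m n : ℕ) (α : ℝ) (f : Fin m → En n → ℝ) (t : ℝ≥0∞) (S : Set (En n)) : Prop :=
  IsDyadic n S ∧ t < dyadAvg m n α f S ∧
    ∀ S', IsDyadic n S' → S ⊂ S' → ¬ t < dyadAvg m n α f S'

/-- The multiple weight constant `[ω]_{A_{P}}` of Lerner–Ombrosi–Pérez–Torres–Trujillo. -/
def ApVec (m n : ℕ) (p : Fin m → ℝ) (pp : ℝ) (ω : Fin m → En n → ℝ≥0∞) : ℝ≥0∞ :=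
  ⨆ (a : Fin n → ℝ) (h : ℝ) (_ : 0 < h),
    (∏ i, ((volume (Cube n a h))⁻¹ *
        ∫⁻ x in Cube n a h, ω i x ^ (1 - rconj (p i))) ^ (pp / rconj (p i))) *
      ((volume (Cube n a h))⁻¹ * ∫⁻ x in Cube n a h, ∏ i, ω i x ^ (pp / p i))

/-- `X`-average `‖g‖_{X,Q} = ‖τ_{ℓ(Q)}(g χ_Q)‖_X` of `g` over the cube `Q = Q(a,h)`,
for an abstract Banach-function-space norm functional `N`. -/
def Xavg (n : ℕ) (N : (En n → ℝ≥0∞) → ℝ≥0∞) (a : Fin n → ℝ) (h : ℝ)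
    (g : En n → ℝ≥0∞) : ℝ≥0∞ :=
  N (fun x => (Cube n a h).indicator g (h • x))

/-- Maximal operator `M_X` associated with the norm functional `N`. -/
def MX (n : ℕ) (N : (En n → ℝ≥0∞) → ℝ≥0∞) (g : En n → ℝ≥0∞) (x : En n) : ℝ≥0∞ :=
  ⨆ (a : Fin n → ℝ) (h : ℝ) (_ : 0 < h) (_ : x ∈ Cube n a h), Xavg n N a h g

/-- Weighted fractional maximal operator `M_{σ,α/m}`. -/
def MWFrac (n m : ℕ) (α : ℝ) (σ : En n → ℝ≥0∞) (f : En n → ℝ) (x : En n) : ℝ≥0∞ :=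
  ⨆ (a : Fin n → ℝ) (h : ℝ) (_ : 0 < h) (_ : x ∈ Cube n a h),
    (∫⁻ y in Cube n a h, σ y) ^ (α / (m * n : ℝ) - 1) *
      ∫⁻ y in Cube n a h, (‖f y‖₊ : ℝ≥0∞) * σ y

/-- The reverse Hölder exponent `r(w) = 1 + 1/(c_n [w]_{A_∞})`. -/
def rExp (n : ℕ) (A : ℝ) : ℝ := 1 + 1 / ((2:ℝ) ^ (11 + n) * A)

end

section Basics

variable {n : ℕ}

lemma cube_eq_preimage (a : Fin n → ℝ) (h : ℝ) :
    Cube n a h = (MeasurableEquiv.toLp 2 (Fin n → ℝ)).symm ⁻¹' (Set.univ.pi fun i => Set.Ico (a i) (a i + h)) := by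
  ext x
  simp [Cube, Set.mem_pi, MeasurableEquiv.coe_toLp_symm, Set.mem_Ico]

lemma measurableSet_cube (a : Fin n → ℝ) (h : ℝ) : MeasurableSet (Cube n a h) := by
  rw [cube_eq_preimage]
  exact (MeasurableEquiv.measurable _) (MeasurableSet.univ_pi fun i => measurableSet_Ico)

lemma volume_cube (a : Fin n → ℝ) (h : ℝ) :
    volume (Cube n a h) = ENNReal.ofReal h ^ n := by
  rw [cube_eq_preimage,
    (EuclideanSpace.volume_preserving_symm_measurableEquiv_toLp (Fin n)).measure_preimage
      ((MeasurableSet.univ_pi fun i => measurableSet_Ico).nullMeasurableSet)]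
  rw [volume_pi_pi]
  simp [Real.volume_Ico]

lemma volume_dyadic (k : ℤ) (j : Fin n → ℤ) :
    volume (DyadicCube n k j) = ENNReal.ofReal ((2:ℝ) ^ (-k)) ^ n :=
  volume_cube _ _

lemma volume_dyadic_pos (k : ℤ) (j : Fin n → ℤ) : 0 < volume (DyadicCube n k j) := by
  rw [volume_dyadic]
  refine ENNReal.pow_pos (ENNReal.ofReal_pos.2 (zpow_pos (by norm_num) _)) n

lemma volume_dyadic_lt_top (k : ℤ) (j : Fin n → ℤ) : volume (DyadicCube n k j) < ⊤ := by
  rw [volume_dyadic]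
  exact ENNReal.pow_lt_top ENNReal.ofReal_lt_top

/-- membership characterization -/
lemma mem_dyadic_iff {k : ℤ} {j : Fin n → ℤ} {x : En n} :
    x ∈ DyadicCube n k j ↔ ∀ i, (j i : ℝ) ≤ (2:ℝ)^k * x i ∧ (2:ℝ)^k * x i < j i + 1 := by
  have hb : (2:ℝ)^k * (2:ℝ)^(-k) = 1 := by
    rw [← zpow_add₀ (by norm_num : (2:ℝ) ≠ 0)]; simp
  have hb' : (2:ℝ)^(-k) * (2:ℝ)^k = 1 := by rw [mul_comm]; exact hb
  have hbpos : (0:ℝ) < (2:ℝ)^k := zpow_pos (by norm_num) _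
  have hbinvpos : (0:ℝ) < (2:ℝ)^(-k) := zpow_pos (by norm_num) _
  constructor <;> intro hx i <;>
    [(rcases hx i with ⟨h1, h2⟩;
      replace h1 : (j i : ℝ) * (2:ℝ)^(-k) ≤ x i := h1;
      replace h2 : x i < (j i : ℝ) * (2:ℝ)^(-k) + (2:ℝ)^(-k) := h2);
     rcases hx i with ⟨h1, h2⟩]
  · have e1 : (2:ℝ)^k * ((j i:ℝ) * (2:ℝ)^(-k)) = (j i : ℝ) := by
      rw [mul_comm ((j i:ℝ)) _, ← mul_assoc, hb, one_mul]
    constructor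
    · have := mul_le_mul_of_nonneg_left h1 hbpos.le
      linarith [this, e1]
    · have := mul_lt_mul_of_pos_left h2 hbpos
      rw [mul_add, e1, hb] at this
      exact this
  · have e3 : (2:ℝ)^(-k) * ((2:ℝ)^k * x i) = x i := by
      rw [← mul_assoc, hb', one_mul]
    constructor
    · show (j i : ℝ) * (2:ℝ)^(-k) ≤ x i
      have := mul_le_mul_of_nonneg_left h1 hbinvpos.le
      rw [e3] at this
      linarith [this]
    · show x i < (j i : ℝ) * (2:ℝ)^(-k) + (2:ℝ)^(-k)
      have := mul_lt_mul_of_pos_left h2 hbinvpos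
      rw [e3, mul_add, mul_one] at this
      linarith [this]

end Basics

section Nest

variable {n : ℕ}

/-- index function: the dyadic cube of level k containing x -/
noncomputable def dyadIdx (k : ℤ) (x : En n) : Fin n → ℤ := fun i => ⌊(2:ℝ)^k * x i⌋

lemma mem_dyadIdx (k : ℤ) (x : En n) : x ∈ DyadicCube n k (dyadIdx k x) :=
  mem_dyadic_iff.2 fun i => ⟨Int.floor_le _, Int.lt_floor_add_one _⟩

lemma dyadIdx_unique {k : ℤ} {j : Fin n → ℤ} {x : En n} (hx : x ∈ DyadicCube n k j) :
    j = dyadIdx k x := by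
  funext i
  rcases mem_dyadic_iff.1 hx i with ⟨h1, h2⟩
  exact (Int.floor_eq_iff.2 ⟨h1, h2⟩).symm

/-- nesting: if two dyadic cubes share a point, the finer one is contained in the coarser -/
lemma dyadic_nested {k k' : ℤ} (hk : k' ≤ k) {j j' : Fin n → ℤ} {x : En n}
    (hx : x ∈ DyadicCube n k j) (hx' : x ∈ DyadicCube n k' j') :
    DyadicCube n k j ⊆ DyadicCube n k' j' := by
  intro y hy
  rw [mem_dyadic_iff] at hx hx' hy ⊢
  intro i
  set d : ℕ := (k - k').toNat with hd
  have hdk : (d : ℤ) = k - k' := Int.toNat_of_nonneg (by omega)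
  set D : ℝ := (2:ℝ) ^ (d : ℕ) with hD
  have hDpos : (0:ℝ) < D := by positivity
  have hpow : ∀ z : ℝ, (2:ℝ)^k * z = D * ((2:ℝ)^k' * z) := by
    intro z
    rw [hD, ← zpow_natCast (2:ℝ) d, hdk, ← mul_assoc,
      ← zpow_add₀ (by norm_num : (2:ℝ) ≠ 0)]
    ring_nf
  rcases hx i with ⟨ha1, ha2⟩
  rcases hx' i with ⟨hb1, hb2⟩
  rcases hy i with ⟨hc1, hc2⟩
  rw [hpow] at ha1 ha2 hc1 hc2
  -- integer bounds
  have key1 : (j' i) * (2^d : ℤ) ≤ j i := by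
    have : ((j' i) * (2^d : ℤ) : ℝ) < j i + 1 := by
      push_cast
      calc (j' i : ℝ) * (2:ℝ)^d = D * (j' i) := by rw [hD]; ring
        _ ≤ D * ((2:ℝ)^k' * x i) := by
            exact mul_le_mul_of_nonneg_left hb1 hDpos.le
        _ < (j i : ℝ) + 1 := ha2
    have h' : (j' i) * (2:ℤ)^d < j i + 1 := by exact_mod_cast this
    omega
  have key2 : (j i) + 1 ≤ (j' i + 1) * (2^d : ℤ) := by
    have : (j i : ℝ) < ((j' i + 1) * (2^d : ℤ) : ℝ) := by
      push_cast
      calc (j i : ℝ) ≤ D * ((2:ℝ)^k' * x i) := ha1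
        _ < D * ((j' i : ℝ) + 1) := mul_lt_mul_of_pos_left hb2 hDpos
        _ = ((j' i : ℝ) + 1) * (2:ℝ)^d := by rw [hD]; ring
    exact Int.add_one_le_iff.2 (by exact_mod_cast this)
  constructor
  · have h1 : (j' i : ℝ) * D ≤ ((2:ℝ)^k' * y i) * D := by
      calc (j' i : ℝ) * D = ((j' i) * (2^d : ℤ) : ℝ) := by push_cast [hD]; ring
        _ ≤ (j i : ℝ) := by exact_mod_cast key1
        _ ≤ D * ((2:ℝ)^k' * y i) := hc1
        _ = ((2:ℝ)^k' * y i) * D := by ring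
    exact le_of_mul_le_mul_right h1 hDpos
  · have h2 : ((2:ℝ)^k' * y i) * D < ((j' i : ℝ) + 1) * D := by
      calc ((2:ℝ)^k' * y i) * D = D * ((2:ℝ)^k' * y i) := by ring
        _ < (j i : ℝ) + 1 := hc2
        _ ≤ (((j' i + 1) * (2^d : ℤ) : ℤ) : ℝ) := by exact_mod_cast key2
        _ = ((j' i : ℝ) + 1) * D := by push_cast [hD]; ring
    exact lt_of_mul_lt_mul_right h2 hDpos.le

/-- distinct dyadic cubes of the same level are disjoint; phrased as: sharing a point ⇒ equal index -/
lemma dyadic_same_level {k : ℤ} {j j' : Fin n → ℤ} {x : En n}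
    (hx : x ∈ DyadicCube n k j) (hx' : x ∈ DyadicCube n k j') : j = j' := by
  rw [dyadIdx_unique hx, dyadIdx_unique hx']

lemma dyadic_nonempty (k : ℤ) (j : Fin n → ℤ) : (DyadicCube n k j).Nonempty := by
  refine ⟨WithLp.toLp 2 (fun i => (j i : ℝ) * (2:ℝ)^(-k) : Fin n → ℝ), fun i => ?_⟩
  constructor
  · exact le_refl _
  · show (j i : ℝ) * (2:ℝ)^(-k) < (j i : ℝ) * (2:ℝ)^(-k) + (2:ℝ)^(-k)
    have : (0:ℝ) < (2:ℝ)^(-k) := zpow_pos (by norm_num) _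
    linarith

/-- containment forces the level: smaller cube has larger k -/
lemma level_le_of_subset (hn : 0 < n) {k k' : ℤ} {j j' : Fin n → ℤ}
    (hsub : DyadicCube n k j ⊆ DyadicCube n k' j') : k' ≤ k := by
  by_contra hlt
  push_neg at hlt
  have hvol := measure_mono hsub (μ := volume)
  rw [volume_dyadic, volume_dyadic] at hvol
  have h2 : ENNReal.ofReal ((2:ℝ)^(-k')) ^ n < ENNReal.ofReal ((2:ℝ)^(-k)) ^ n := by
    refine ENNReal.pow_lt_pow_left (by omega) ?_
    refine (ENNReal.ofReal_lt_ofReal_iff (by positivity)).2 ?_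
    exact zpow_lt_zpow_right₀ (by norm_num) (by omega)
  exact absurd hvol (not_le.2 h2)

/-- strict containment forces strictly smaller level -/
lemma level_lt_of_ssubset (hn : 0 < n) {k k' : ℤ} {j j' : Fin n → ℤ}
    (hsub : DyadicCube n k j ⊂ DyadicCube n k' j') : k' < k := by
  have hle := level_le_of_subset hn hsub.subset
  rcases lt_or_eq_of_le hle with h | h
  · exact h
  · exfalso
    subst h
    rcases dyadic_nonempty _ j with ⟨x, hx⟩
    have := dyadic_same_level hx (hsub.subset hx)
    subst this
    exact hsub.ne rfl

end Nest

lemma measurableSet_dyadic {n : ℕ} (k : ℤ) (j : Fin n → ℤ) :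
    MeasurableSet (DyadicCube n k j) := measurableSet_cube _ _


/-- for the maximal dyadic cubes of `Ω_k = {M_α^d(f⃗) > a^k}` with
`a = 2^{m(n+1)}`, one has `|Q_j^k ∩ Ω_{k+1}| ≤ 2^n a^{-1/m} |Q_j^k|`. -/
theorem statement_16 (m n : ℕ) (hm : 0 < m) (hn : 0 < n) (α : ℝ) (hα : 0 < α)
    (hα' : α < m * n) (f : Fin m → En n → ℝ)
    (hf : ∀ i, MeasureTheory.LocallyIntegrable (f i) volume)
    (k : ℤ) (S : Set (En n))
    (hS : IsCZCube m n α f (((2:ℝ≥0∞) ^ (m * (n+1))) ^ k) S)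
    (hupper : dyadAvg m n α f S ≤
      (2:ℝ≥0∞) ^ (m * n) * ((2:ℝ≥0∞) ^ (m * (n+1))) ^ k) :
    volume (S ∩ {x | ((2:ℝ≥0∞) ^ (m * (n+1))) ^ (k+1) < MFracDyadic m n α f x}) ≤
      (2:ℝ≥0∞) ^ n * ((2:ℝ≥0∞) ^ (m * (n+1))) ^ (-(1/(m:ℝ))) * volume S := by
  classical
  obtain ⟨⟨k₀, j₀, hSd⟩, hlow, hmax⟩ := hS
  set M : ℕ := m * (n+1) with hM
  set aP : ℝ≥0∞ := (2:ℝ≥0∞) ^ M with haP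
  have ha0 : aP ≠ 0 := by
    rw [haP]; exact pow_ne_zero _ (by norm_num)
  have hat : aP ≠ ⊤ := by
    rw [haP]; exact ENNReal.pow_ne_top (by norm_num)
  have ha1 : 1 < aP := by
    rw [haP]
    have : (1:ℝ≥0∞) < 2 := ENNReal.one_lt_two
    calc (1:ℝ≥0∞) = 1 ^ M := (one_pow M).symm
      _ < 2 ^ M := by
          refine ENNReal.pow_lt_pow_left ?_ this
          have : 0 < M := by positivity
          omega
  have hzk0 : ∀ q : ℤ, aP ^ q ≠ 0 := fun q => (ENNReal.zpow_pos ha0 hat q).ne'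
  have hzkt : ∀ q : ℤ, aP ^ q ≠ ⊤ := fun q => (ENNReal.zpow_lt_top ha0 hat q).ne
  have hstep : aP ^ k < aP ^ (k+1) := by
    rw [ENNReal.zpow_add ha0 hat k 1, zpow_one]
    nth_rewrite 1 [show aP ^ k = aP ^ k * 1 by rw [mul_one]]
    exact (ENNReal.mul_lt_mul_iff_right (hzk0 k) (hzkt k)).2 ha1
  -- volume facts about S
  have hvS0 : volume S ≠ 0 := by
    rw [hSd]; exact (volume_dyadic_pos k₀ j₀).ne'
  have hvSt : volume S ≠ ⊤ := by
    rw [hSd]; exact (volume_dyadic_lt_top k₀ j₀).ne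
  -- the family of good pairs and its maximal subfamily
  set Pg : ℤ × (Fin n → ℤ) → Prop := fun q =>
    DyadicCube n q.1 q.2 ⊆ S ∧ aP ^ (k+1) < dyadAvg m n α f (DyadicCube n q.1 q.2) with hPg
  set I : Set (ℤ × (Fin n → ℤ)) := {p | Pg p ∧ ∀ q, Pg q → q.1 < p.1 →
    ¬ (DyadicCube n p.1 p.2 ⊆ DyadicCube n q.1 q.2)} with hI
  haveI : Countable ↥I := (Set.to_countable I).to_subtype
  set Q : ↥I → Set (En n) := fun p => DyadicCube n p.1.1 p.1.2 with hQ
  -- cover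
  have cover : S ∩ {x | aP ^ (k+1) < MFracDyadic m n α f x} ⊆ ⋃ p : ↥I, Q p := by
    rintro x ⟨hxS, hxT⟩
    have hxT' : aP ^ (k+1) < MFracDyadic m n α f x := hxT
    rw [MFracDyadic, lt_iSup_iff] at hxT'
    obtain ⟨κ, hκ⟩ := hxT'
    rw [lt_iSup_iff] at hκ
    obtain ⟨jj, hjj⟩ := hκ
    rw [lt_iSup_iff] at hjj
    obtain ⟨hmem, hgt⟩ := hjj
    -- the good cube is contained in S
    have good_sub : ∀ κ' jj', x ∈ DyadicCube n κ' jj' →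
        aP ^ (k+1) < dyadAvg m n α f (DyadicCube n κ' jj') → DyadicCube n κ' jj' ⊆ S := by
      intro κ' jj' hmem' hgt'
      by_cases hle : k₀ ≤ κ'
      · rw [hSd]; exact dyadic_nested hle hmem' (hSd ▸ hxS)
      · exfalso
        push_neg at hle
        have hsub : S ⊆ DyadicCube n κ' jj' := by
          rw [hSd]; exact dyadic_nested hle.le (hSd ▸ hxS) hmem'
        have hne : S ≠ DyadicCube n κ' jj' := by
          intro h
          have : DyadicCube n κ' jj' ⊆ DyadicCube n k₀ j₀ := by rw [← hSd, h]
          exact absurd (level_le_of_subset hn this) (by omega)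
        exact hmax _ ⟨κ', jj', rfl⟩ (ssubset_of_subset_of_ne hsub hne)
          (lt_trans hstep hgt')
    -- minimal level
    set K : ℤ → Prop := fun κ' => DyadicCube n κ' (dyadIdx κ' x) ⊆ S ∧
      aP ^ (k+1) < dyadAvg m n α f (DyadicCube n κ' (dyadIdx κ' x)) with hK
    have hKbdd : ∀ κ', K κ' → k₀ ≤ κ' := by
      intro κ' hκ'
      have : DyadicCube n κ' (dyadIdx κ' x) ⊆ DyadicCube n k₀ j₀ := hSd ▸ hκ'.1
      exact level_le_of_subset hn this
    have hKne : ∃ κ', K κ' := by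
      refine ⟨κ, ?_⟩
      have hje : jj = dyadIdx κ x := dyadIdx_unique hmem
      rw [hK]
      refine ⟨?_, ?_⟩ <;> rw [← hje]
      · exact good_sub κ jj hmem hgt
      · exact hgt
    obtain ⟨κs, hκs, hleast⟩ := Int.exists_least_of_bdd ⟨k₀, hKbdd⟩ hKne
    have hpI : (κs, dyadIdx κs x) ∈ I := by
      refine ⟨⟨hκs.1, hκs.2⟩, ?_⟩
      intro q hq hqlt hsub
      have hxq : x ∈ DyadicCube n q.1 q.2 := hsub (mem_dyadIdx κs x)
      have hje : q.2 = dyadIdx q.1 x := dyadIdx_unique hxq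
      have : K q.1 := by
        rw [hK]
        constructor <;> rw [← hje]
        · exact hq.1
        · exact hq.2
      exact absurd (hleast q.1 this) (by omega)
    exact Set.mem_iUnion.2 ⟨⟨(κs, dyadIdx κs x), hpI⟩, mem_dyadIdx κs x⟩
  -- pairwise disjoint
  have key : ∀ p q : ↥I, (∃ y, y ∈ Q p ∧ y ∈ Q q) → q.1.1 ≤ p.1.1 → p = q := by
    rintro p q ⟨y, hyp, hyq⟩ hle
    rcases eq_or_lt_of_le hle with heq | hlt
    · have hyq' : y ∈ DyadicCube n p.1.1 q.1.2 := by rw [← heq]; exact hyq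
      have := dyadic_same_level hyp hyq'
      refine Subtype.ext (Prod.ext heq.symm ?_)
      exact this
    · exfalso
      have hsub : Q p ⊆ Q q := dyadic_nested hle hyp hyq
      exact p.2.2 q.1 q.2.1 hlt hsub
  have hdisj : Pairwise (Function.onFun Disjoint Q) := by
    intro p q hne
    rw [Function.onFun, Set.disjoint_iff_inter_eq_empty]
    by_contra hcon
    rcases Set.nonempty_iff_ne_empty.2 hcon with ⟨y, hy1, hy2⟩
    rcases le_total q.1.1 p.1.1 with h | h
    · exact hne (key p q ⟨y, hy1, hy2⟩ h)
    · exact hne ((key q p ⟨y, hy2, hy1⟩ h).symm)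
  -- reduce to the sum over the family
  have hsum : volume (S ∩ {x | aP ^ (k+1) < MFracDyadic m n α f x}) ≤
      ∑' p : ↥I, volume (Q p) :=
    le_trans (measure_mono cover) (measure_iUnion_le Q)
  have main : (∑' p : ↥I, volume (Q p)) ≤
      (2:ℝ≥0∞) ^ n * aP ^ (-(1/(m:ℝ))) * volume S := by
    have hm' : (m:ℝ) ≠ 0 := Nat.cast_ne_zero.2 hm.ne'
    have h1m : (0:ℝ) ≤ 1/(m:ℝ) := by positivity
    have hc0 : (0:ℝ) ≤ α / (m * n : ℝ) := by positivity
    set c : ℝ := α / (m * n : ℝ) with hc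
    letI msI : MeasurableSpace ↥I := ⊤
    haveI : MeasurableSingletonClass ↥I := ⟨fun _ => trivial⟩
    have rpow_pow : ∀ z : ℝ≥0∞, (z ^ (m:ℕ)) ^ (1/(m:ℝ)) = z := by
      intro z
      rw [← ENNReal.rpow_natCast z m, ← ENNReal.rpow_mul, mul_one_div, div_self hm',
        ENNReal.rpow_one]
    have prod_shift : ∀ (U : Set (En n)), volume U ≠ 0 → volume U ≠ ⊤ →
        (∏ i, (volume U ^ c * ∫⁻ y in U, (‖f i y‖₊ : ℝ≥0∞))) =
          volume U ^ (m:ℕ) * dyadAvg m n α f U := by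
      intro U h0 ht
      have hsplit : volume U ^ c = volume U * volume U ^ (c - 1) := by
        calc volume U ^ c = volume U ^ ((1:ℝ) + (c-1)) := by rw [show (1:ℝ)+(c-1) = c by ring]
          _ = volume U ^ (1:ℝ) * volume U ^ (c-1) := ENNReal.rpow_add 1 (c-1) h0 ht
          _ = volume U * volume U ^ (c-1) := by rw [ENNReal.rpow_one]
      rw [dyadAvg, ← hc]
      calc ∏ i, (volume U ^ c * ∫⁻ y in U, (‖f i y‖₊ : ℝ≥0∞))
          = ∏ i, (volume U * (volume U ^ (c-1) * ∫⁻ y in U, (‖f i y‖₊ : ℝ≥0∞))) := by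
            refine Finset.prod_congr rfl fun i _ => ?_
            rw [hsplit, mul_assoc]
        _ = (∏ _i : Fin m, volume U) *
              ∏ i, (volume U ^ (c-1) * ∫⁻ y in U, (‖f i y‖₊ : ℝ≥0∞)) := Finset.prod_mul_distrib
        _ = volume U ^ (m:ℕ) * ∏ i, (volume U ^ (c-1) * ∫⁻ y in U, (‖f i y‖₊ : ℝ≥0∞)) := by
            rw [Finset.prod_const, Finset.card_univ, Fintype.card_fin]
    set g : Fin m → ↥I → ℝ≥0∞ :=
      fun i p => volume (Q p) ^ c * ∫⁻ y in Q p, (‖f i y‖₊ : ℝ≥0∞) with hg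
    have hQ0 : ∀ p : ↥I, volume (Q p) ≠ 0 := fun p => (volume_dyadic_pos _ _).ne'
    have hQt : ∀ p : ↥I, volume (Q p) ≠ ⊤ := fun p => (volume_dyadic_lt_top _ _).ne
    have hQsubS : ∀ p : ↥I, Q p ⊆ S := fun p => p.2.1.1
    have hQavg : ∀ p : ↥I, aP ^ (k+1) < dyadAvg m n α f (Q p) := fun p => p.2.1.2
    have h2 : ∀ p : ↥I, volume (Q p) ≤
        (aP^(k+1)) ^ (-(1/(m:ℝ))) * ∏ i, (g i p) ^ (1/(m:ℝ)) := by
      intro p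
      have hkey : aP^(k+1) * volume (Q p) ^ (m:ℕ) ≤ ∏ i, g i p := by
        simp only [hg]
        calc aP^(k+1) * volume (Q p)^(m:ℕ)
            ≤ dyadAvg m n α f (Q p) * volume (Q p)^(m:ℕ) := mul_le_mul_left (hQavg p).le _
          _ = volume (Q p)^(m:ℕ) * dyadAvg m n α f (Q p) := mul_comm _ _
          _ = ∏ i, (volume (Q p) ^ c * ∫⁻ y in Q p, (‖f i y‖₊ : ℝ≥0∞)) :=
              (prod_shift _ (hQ0 p) (hQt p)).symm
      calc volume (Q p)
          = (aP^(k+1))^(-(1/(m:ℝ))) * ((aP^(k+1))^((1/(m:ℝ))) * volume (Q p)) := by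
            rw [← mul_assoc, ← ENNReal.rpow_add _ _ (hzk0 (k+1)) (hzkt (k+1)),
              neg_add_cancel, ENNReal.rpow_zero, one_mul]
        _ = (aP^(k+1))^(-(1/(m:ℝ))) * (aP^(k+1) * volume (Q p)^(m:ℕ)) ^ (1/(m:ℝ)) := by
            rw [ENNReal.mul_rpow_of_nonneg _ _ h1m, rpow_pow]
        _ ≤ (aP^(k+1))^(-(1/(m:ℝ))) * (∏ i, g i p) ^ (1/(m:ℝ)) :=
            mul_le_mul_right (ENNReal.rpow_le_rpow hkey h1m) _
        _ = (aP^(k+1))^(-(1/(m:ℝ))) * ∏ i, (g i p) ^ (1/(m:ℝ)) := by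
            rw [ENNReal.prod_rpow_of_nonneg h1m]
    have hold : (∑' p : ↥I, ∏ i, (g i p) ^ (1/(m:ℝ))) ≤
        ∏ i, (∑' p : ↥I, g i p) ^ (1/(m:ℝ)) := by
      have hH := ENNReal.lintegral_prod_norm_pow_le (μ := (Measure.count : Measure ↥I))
        Finset.univ (f := g) (fun i _ => Measurable.aemeasurable (fun s _ => trivial))
        (p := fun _ : Fin m => 1/(m:ℝ))
        (by rw [Finset.sum_const, Finset.card_univ, Fintype.card_fin, nsmul_eq_mul]
            field_simp)
        (fun i _ => h1m)
      calc (∑' p : ↥I, ∏ i, (g i p) ^ (1/(m:ℝ)))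
          = ∫⁻ p, ∏ i, (g i p) ^ (1/(m:ℝ)) ∂(Measure.count : Measure ↥I) :=
            (lintegral_count _).symm
        _ ≤ ∏ i, (∫⁻ p, g i p ∂(Measure.count : Measure ↥I)) ^ (1/(m:ℝ)) := hH
        _ = ∏ i, (∑' p : ↥I, g i p) ^ (1/(m:ℝ)) :=
            Finset.prod_congr rfl fun i _ => by rw [lintegral_count]
    have hsum_g : ∀ i, (∑' p : ↥I, g i p) ≤
        volume S ^ c * ∫⁻ y in S, (‖f i y‖₊ : ℝ≥0∞) := by
      intro i
      have step1 : ∀ p : ↥I, g i p ≤ volume S ^ c * ∫⁻ y in Q p, (‖f i y‖₊ : ℝ≥0∞) := fun p =>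
        mul_le_mul_left (ENNReal.rpow_le_rpow (measure_mono (hQsubS p)) hc0) _
      calc (∑' p : ↥I, g i p)
          ≤ ∑' p : ↥I, volume S ^ c * ∫⁻ y in Q p, (‖f i y‖₊ : ℝ≥0∞) :=
            ENNReal.tsum_le_tsum step1
        _ = volume S ^ c * ∑' p : ↥I, ∫⁻ y in Q p, (‖f i y‖₊ : ℝ≥0∞) := ENNReal.tsum_mul_left
        _ = volume S ^ c * ∫⁻ y in ⋃ p : ↥I, Q p, (‖f i y‖₊ : ℝ≥0∞) := by
            rw [lintegral_iUnion (s := Q) (fun p => measurableSet_dyadic _ _) hdisj]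
        _ ≤ volume S ^ c * ∫⁻ y in S, (‖f i y‖₊ : ℝ≥0∞) :=
            mul_le_mul_right
              (lintegral_mono' (Measure.restrict_mono (Set.iUnion_subset hQsubS) le_rfl) le_rfl) _
    have hS_prod : (∏ i, (volume S ^ c * ∫⁻ y in S, (‖f i y‖₊ : ℝ≥0∞))) ≤
        volume S ^ (m:ℕ) * ((2:ℝ≥0∞)^(m*n) * aP^k) := by
      rw [prod_shift S hvS0 hvSt]
      exact mul_le_mul_right hupper _
    have htwo0 : (2:ℝ≥0∞) ≠ 0 := by norm_num
    have htwot : (2:ℝ≥0∞) ≠ ⊤ := ENNReal.ofNat_ne_top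
    have haz : ∀ q : ℤ, aP ^ q = (2:ℝ≥0∞) ^ (((M:ℕ):ℝ) * q) := by
      intro q
      rw [haP, ← ENNReal.rpow_natCast 2 M,
        ← ENNReal.rpow_intCast ((2:ℝ≥0∞) ^ ((M:ℕ):ℝ)) q, ← ENNReal.rpow_mul]
    have hfinal : (aP^(k+1))^(-(1/(m:ℝ))) * (aP^k)^(1/(m:ℝ)) = aP ^ (-(1/(m:ℝ))) := by
      rw [haz, haz, ← ENNReal.rpow_mul, ← ENNReal.rpow_mul,
        ← ENNReal.rpow_add _ _ htwo0 htwot, haP, ← ENNReal.rpow_natCast 2 M,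
        ← ENNReal.rpow_mul]
      congr 1
      push_cast
      field_simp
      try ring
    have h2mn : ((2:ℝ≥0∞)^(m*n)) ^ (1/(m:ℝ)) = (2:ℝ≥0∞)^n := by
      rw [← ENNReal.rpow_natCast 2 (m*n), ← ENNReal.rpow_mul, ← ENNReal.rpow_natCast 2 n]
      congr 1
      push_cast
      field_simp
      try ring
    calc (∑' p : ↥I, volume (Q p))
        ≤ ∑' p : ↥I, (aP^(k+1))^(-(1/(m:ℝ))) * ∏ i, (g i p) ^ (1/(m:ℝ)) :=
          ENNReal.tsum_le_tsum h2
      _ = (aP^(k+1))^(-(1/(m:ℝ))) * ∑' p : ↥I, ∏ i, (g i p) ^ (1/(m:ℝ)) := ENNReal.tsum_mul_left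
      _ ≤ (aP^(k+1))^(-(1/(m:ℝ))) * ∏ i, (∑' p : ↥I, g i p) ^ (1/(m:ℝ)) :=
          mul_le_mul_right hold _
      _ ≤ (aP^(k+1))^(-(1/(m:ℝ))) *
            ∏ i, (volume S ^ c * ∫⁻ y in S, (‖f i y‖₊ : ℝ≥0∞)) ^ (1/(m:ℝ)) :=
          mul_le_mul_right
            (Finset.prod_le_prod' fun i _ => ENNReal.rpow_le_rpow (hsum_g i) h1m) _
      _ = (aP^(k+1))^(-(1/(m:ℝ))) *
            (∏ i, (volume S ^ c * ∫⁻ y in S, (‖f i y‖₊ : ℝ≥0∞))) ^ (1/(m:ℝ)) := by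
          rw [ENNReal.prod_rpow_of_nonneg h1m]
      _ ≤ (aP^(k+1))^(-(1/(m:ℝ))) *
            (volume S ^ (m:ℕ) * ((2:ℝ≥0∞)^(m*n) * aP^k)) ^ (1/(m:ℝ)) :=
          mul_le_mul_right (ENNReal.rpow_le_rpow hS_prod h1m) _
      _ = (2:ℝ≥0∞) ^ n * aP ^ (-(1/(m:ℝ))) * volume S := by
          rw [ENNReal.mul_rpow_of_nonneg _ _ h1m, ENNReal.mul_rpow_of_nonneg _ _ h1m,
            rpow_pow, h2mn]
          calc (aP^(k+1))^(-(1/(m:ℝ))) *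
                (volume S * ((2:ℝ≥0∞)^n * (aP^k)^(1/(m:ℝ))))
              = ((aP^(k+1))^(-(1/(m:ℝ))) * (aP^k)^(1/(m:ℝ))) * ((2:ℝ≥0∞)^n * volume S) := by
                ring
            _ = (2:ℝ≥0∞) ^ n * aP ^ (-(1/(m:ℝ))) * volume S := by rw [hfinal]; ring
  exact le_trans hsum main
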